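/- Let M be as in the minimum segmentation recurrence and, for fixed k ≥ 2L, let 0 = j_{k,0} < j_{k,1} < ... < j_{k,r_k} < j_{k,r_k+1} = k-L+1 where j_{k,1},...,j_{k,r_k} are exactly the positions j ∈ [1,k-L] with |R[j,k]| ≠ |R[j+1,k]|. Then min over 0 ≤ j ≤ k-L of max{M(j), |R[j+1,k]|} equals min over 0 ≤ h ≤ r_k of max{|R[j_{k,h+1}, k]|, min{M(j) : j_{k,h} ≤ j < j_{k,h+1}}}. -/

import Mathlib

/-- The number of distinct substrings `R_i[j..k]` among the strings `R_1, …, R_m`. -/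
def segCard {α : Type*} [DecidableEq α] {m : ℕ} (R : Fin m → ℕ → α) (j k : ℕ) : ℕ :=
  (Finset.univ.image (fun i : Fin m => fun x : Fin (k + 1 - j) => R i (j + x))).card

theorem stmt8 {α : Type*} [DecidableEq α] (m n L : ℕ) (hL : 1 ≤ L)
    (R : Fin m → ℕ → α) (M : ℕ → ℕ∞) (k : ℕ) (hk : 2 * L ≤ k) (hkn : k ≤ n)
    (r : ℕ) (J : Fin (r + 2) → ℕ) (hJmono : StrictMono J)
    (hJ0 : J 0 = 0) (hJlast : J (Fin.last (r + 1)) = k - L + 1)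
    (hJchange : ∀ h : Fin (r + 2), 0 < (h : ℕ) → (h : ℕ) < r + 1 →
      1 ≤ J h ∧ J h ≤ k - L ∧ segCard R (J h) k ≠ segCard R (J h + 1) k)
    (hJall : ∀ x, 1 ≤ x → x ≤ k - L → segCard R x k ≠ segCard R (x + 1) k →
      ∃ h : Fin (r + 2), 0 < (h : ℕ) ∧ (h : ℕ) < r + 1 ∧ J h = x) :
    ((Finset.Icc 0 (k - L)).inf fun j => max (M j) (segCard R (j + 1) k : ℕ∞)) =
      Finset.univ.inf fun h : Fin (r + 1) =>
        max (segCard R (J h.succ) k : ℕ∞)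
          ((Finset.Ico (J h.castSucc) (J h.succ)).inf M) := by

  have hJle : ∀ h : Fin (r + 1), J h.succ ≤ k - L + 1 := fun h => by
    have := hJmono.monotone (Fin.le_last h.succ)
    simpa [hJlast] using this
  have hconst : ∀ h : Fin (r + 1), ∀ x, J h.castSucc < x → x ≤ J h.succ →
      segCard R x k = segCard R (J h.succ) k := by
    intro h
    have key : ∀ d x, x + d = J h.succ → J h.castSucc < x →
        segCard R x k = segCard R (J h.succ) k := by
      intro d
      induction d with
      | zero =>
        intro x hx _
        simp only [Nat.add_zero] at hx
        rw [hx]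
      | succ d ih =>
        intro x hx hlt
        have h1 : 1 ≤ x := by omega
        have hxk : x ≤ k - L := by
          have := hJle h; omega
        by_cases hc : segCard R x k = segCard R (x + 1) k
        · rw [hc]; exact ih (x + 1) (by omega) (by omega)
        · exfalso
          obtain ⟨h', h'0, h'r, hJh'⟩ := hJall x h1 hxk hc
          have lt1 : h.castSucc < h' := hJmono.lt_iff_lt.mp (by omega)
          have lt2 : h' < h.succ := hJmono.lt_iff_lt.mp (by omega)
          rw [Fin.lt_def] at lt1 lt2
          simp [Fin.val_succ] at lt1 lt2
          omega
    intro x hlt hle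
    exact key (J h.succ - x) x (by omega) hlt
  have hfind : ∀ j, j ≤ k - L → ∃ h : Fin (r + 1),
      J h.castSucc ≤ j ∧ j < J h.succ := by
    intro j hj
    have hne : (Finset.univ.filter (fun h : Fin (r + 2) => J h ≤ j)).Nonempty :=
      ⟨0, by simp [hJ0]⟩
    set h0 := (Finset.univ.filter (fun h : Fin (r + 2) => J h ≤ j)).max' hne with hh0
    have h0mem := Finset.max'_mem _ hne
    rw [← hh0] at h0mem
    have hJh0 : J h0 ≤ j := (Finset.mem_filter.mp h0mem).2
    have h0lt : (h0 : ℕ) < r + 1 := by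
      by_contra hcon
      have : h0 = Fin.last (r + 1) := by
        apply Fin.ext; simp; omega
      rw [this, hJlast] at hJh0; omega
    refine ⟨⟨h0, h0lt⟩, ?_, ?_⟩
    · have : (⟨(h0 : ℕ), h0lt⟩ : Fin (r + 1)).castSucc = h0 := by
        apply Fin.ext; simp
      rw [this]; exact hJh0
    · by_contra hcon
      push_neg at hcon
      have hmem : (⟨(h0 : ℕ), h0lt⟩ : Fin (r + 1)).succ ∈
          Finset.univ.filter (fun h : Fin (r + 2) => J h ≤ j) := by
        simp only [Finset.mem_filter, Finset.mem_univ, true_and]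
        exact hcon
      have := Finset.le_max' _ _ hmem
      rw [← hh0] at this
      rw [Fin.le_def] at this
      simp [Fin.val_succ] at this
  apply le_antisymm
  · apply Finset.le_inf
    intro h _
    have hne : (Finset.Ico (J h.castSucc) (J h.succ)).Nonempty :=
      Finset.nonempty_Ico.mpr (hJmono (Fin.castSucc_lt_succ : h.castSucc < h.succ))
    obtain ⟨j0, hj0mem, hj0⟩ := Finset.exists_mem_eq_inf _ hne M
    rw [Finset.mem_Ico] at hj0mem
    have hjIcc : j0 ∈ Finset.Icc 0 (k - L) := by
      rw [Finset.mem_Icc]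
      have := hJle h; omega
    calc ((Finset.Icc 0 (k - L)).inf fun j => max (M j) (segCard R (j + 1) k : ℕ∞))
        ≤ max (M j0) (segCard R (j0 + 1) k : ℕ∞) := Finset.inf_le hjIcc
      _ = _ := by
          rw [hconst h (j0 + 1) (by omega) (by omega), ← hj0]
          exact max_comm _ _
  · apply Finset.le_inf
    intro j hj
    rw [Finset.mem_Icc] at hj
    obtain ⟨h, hle, hlt⟩ := hfind j hj.2
    have hcs : segCard R (j + 1) k = segCard R (J h.succ) k :=
      hconst h (j + 1) (by omega) (by omega)
    calc (Finset.univ.inf fun h : Fin (r + 1) =>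
            max (segCard R (J h.succ) k : ℕ∞)
              ((Finset.Ico (J h.castSucc) (J h.succ)).inf M))
        ≤ max (segCard R (J h.succ) k : ℕ∞)
            ((Finset.Ico (J h.castSucc) (J h.succ)).inf M) :=
          Finset.inf_le (Finset.mem_univ h)
      _ ≤ max (M j) (segCard R (j + 1) k : ℕ∞) := by
          rw [hcs, max_comm]
          exact max_le_max (Finset.inf_le (Finset.mem_Ico.mpr ⟨hle, hlt⟩)) le_rfl
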